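/- There exists an automorphism φ of a finitely generated free group F (for example, the free group of rank 2) such that for every finite-index subgroup H of F with φ(H) ⊆ H, the restriction φ|_H has an eigenvalue that is not a root of unity. This answers Casson's question negatively: it is not true that every automorphism of a finitely generated free group admits a finite-index invariant subgroup on which all eigenvalues are roots of unity. -/

import Mathlib

open scoped TensorProduct

/-- The complex linear endomorphism of `(G/[G,G]) ⊗_ℤ ℂ` induced by a group
endomorphism `φ : G →* G`. -/
noncomputable def inducedEnd {G : Type*} [Group G] (φ : G →* G) :
    Module.End ℂ (ℂ ⊗[ℤ] Additive (Abelianization G)) :=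
  ((MonoidHom.toAdditive (Abelianization.map φ)).toIntLinearMap).baseChange ℂ

/-- `Λ(φ)`: the set of nonzero eigenvalues of the induced map on
`(G/[G,G]) ⊗_ℤ ℂ`. -/
noncomputable def specNZ {G : Type*} [Group G] (φ : G →* G) : Set ℂ :=
  {μ : ℂ | μ ≠ 0 ∧ Module.End.HasEigenvalue (inducedEnd φ) μ}

/-- The restriction of an endomorphism `φ` to a `φ`-invariant subgroup `H`,
as an endomorphism of `H`. -/
def restrictHom {G : Type*} [Group G] (φ : G →* G) (H : Subgroup G)
    (hinv : ∀ x ∈ H, φ x ∈ H) : H →* H :=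
  (φ.domRestrict H).codRestrict H fun x => hinv x x.2

/-- A complex number is a root of unity if some positive power of it equals `1`. -/
def IsRootOfUnity (z : ℂ) : Prop := ∃ n : ℕ, 0 < n ∧ z ^ n = 1

/-! ### Auxiliary material -/

set_option linter.unnecessarySeqFocus false

/-- If `q : V → W` is a surjective intertwiner of `A` and `B`, with `V` finite dimensional,
then every eigenvalue of `B` is an eigenvalue of `A`. -/
lemma eig_of_surj {V W : Type*} [AddCommGroup V] [Module ℂ V] [AddCommGroup W] [Module ℂ W]
    [FiniteDimensional ℂ V] (A : Module.End ℂ V) (B : Module.End ℂ W) (q : V →ₗ[ℂ] W)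
    (hq : Function.Surjective q) (hc : ∀ v, q (A v) = B (q v)) {μ : ℂ}
    (hμ : B.HasEigenvalue μ) : A.HasEigenvalue μ := by
  haveI : FiniteDimensional ℂ W := Module.Finite.of_surjective q hq
  by_contra h
  rw [Module.End.hasEigenvalue_iff, not_not, Module.End.eigenspace_def, LinearMap.ker_eq_bot] at h
  have hsurj : Function.Surjective (A - μ • (1 : Module.End ℂ V)) :=
    LinearMap.injective_iff_surjective.mp h
  have hsB : Function.Surjective (B - μ • (1 : Module.End ℂ W)) := by
    intro w
    obtain ⟨v, rfl⟩ := hq w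
    obtain ⟨u, hu⟩ := hsurj v
    refine ⟨q u, ?_⟩
    have := congrArg q hu
    simp only [LinearMap.sub_apply, LinearMap.smul_apply, Module.End.one_apply, map_sub,
      map_smul, hc] at this ⊢
    exact this
  have hinjB : Function.Injective (B - μ • (1 : Module.End ℂ W)) :=
    LinearMap.injective_iff_surjective.mpr hsB
  exact hμ (by
    show Module.End.eigenspace B μ = ⊥
    rw [Module.End.eigenspace_def, LinearMap.ker_eq_bot]; exact hinjB)

/-- For a finite index subgroup `H ≤ G`, the induced map
`ℂ ⊗ H^ab → ℂ ⊗ G^ab` is surjective. -/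
lemma surj_baseChange {G : Type*} [Group G] (H : Subgroup G) [H.FiniteIndex] :
    Function.Surjective
      ((MonoidHom.toAdditive (Abelianization.map H.subtype)).toIntLinearMap.baseChange ℂ) := by
  classical
  set i : Abelianization H →* Abelianization G := Abelianization.map H.subtype
  set K : Subgroup (Abelianization G) := i.range with hK
  have hle : H.map (Abelianization.of) ≤ K := by
    rintro _ ⟨h, hh, rfl⟩
    exact ⟨Abelianization.of ⟨h, hh⟩, by simp [i, Abelianization.map_of]⟩
  have hof : Function.Surjective (Abelianization.of (G := G)) :=
    fun y => Quotient.inductionOn y fun g => ⟨g, rfl⟩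
  have hmapfi : (H.map (Abelianization.of)).index ≠ 0 := by
    have hdvd := Subgroup.index_map_dvd (f := (Abelianization.of (G := G))) (H := H) hof
    intro h0
    rw [h0] at hdvd
    exact Subgroup.FiniteIndex.index_ne_zero (zero_dvd_iff.mp hdvd)
  have hKfi : K.index ≠ 0 := fun h0 => hmapfi <| by
    have := Subgroup.index_dvd_of_le hle
    rwa [h0, zero_dvd_iff] at this
  set n := K.index with hn
  have key : ∀ m : Abelianization G, m ^ n ∈ K := fun m => K.pow_index_mem m
  intro w
  induction w using TensorProduct.induction_on with
  | zero => exact ⟨0, map_zero _⟩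
  | tmul z m =>
    obtain ⟨y, hy⟩ := key (Additive.toMul m)
    refine ⟨(n : ℂ)⁻¹ • (z ⊗ₜ Additive.ofMul y), ?_⟩
    have hnc : (n : ℂ) ≠ 0 := Nat.cast_ne_zero.mpr hKfi
    rw [map_smul, LinearMap.baseChange_tmul]
    have him : (MonoidHom.toAdditive i).toIntLinearMap (Additive.ofMul y) = (n : ℤ) • m := by
      show Additive.ofMul (i y) = (n : ℤ) • m
      rw [hy, natCast_zsmul]
      exact ofMul_pow n (Additive.toMul m)
    rw [him, TensorProduct.tmul_smul, Int.cast_smul_eq_zsmul ℂ ((n : ℤ)) (z ⊗ₜ m) |>.symm]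
    push_cast
    rw [inv_smul_smul₀ hnc]
  | add x y hx hy =>
    obtain ⟨x', hx'⟩ := hx
    obtain ⟨y', hy'⟩ := hy
    exact ⟨x' + y', by rw [map_add, hx', hy']⟩

/-- The free group of rank 2. -/
abbrev FF := FreeGroup (Fin 2)

/-- `a ↦ b`, `b ↦ ab²`. -/
def fφ : FF →* FF := FreeGroup.lift ![FreeGroup.of 1, FreeGroup.of 0 * FreeGroup.of 1 ^ 2]

/-- Inverse: `a ↦ ba⁻²`, `b ↦ a`. -/
def gφ : FF →* FF :=
  FreeGroup.lift ![FreeGroup.of 1 * (FreeGroup.of 0)⁻¹ * (FreeGroup.of 0)⁻¹, FreeGroup.of 0]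

/-- The witness automorphism of the free group of rank 2. -/
def φwit : FF ≃* FF :=
  MonoidHom.toMulEquiv fφ gφ
    (by
      apply FreeGroup.ext_hom
      intro a
      fin_cases a <;>
        simp [fφ, gφ, map_mul, map_pow, map_inv] <;> group)
    (by
      apply FreeGroup.ext_hom
      intro a
      fin_cases a <;>
        simp [fφ, gφ, map_mul, map_pow, map_inv] <;> group)

/-- The eigenvalue `1 + √2`. -/
noncomputable def μwit : ℂ := ((1 + Real.sqrt 2 : ℝ) : ℂ)

lemma μwit_sq : μwit * μwit = 1 + 2 * μwit := by
  unfold μwit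
  rw [← Complex.ofReal_mul]
  have h : (Real.sqrt 2) ^ 2 = 2 := Real.sq_sqrt (by norm_num)
  have he : ((1 + Real.sqrt 2) * (1 + Real.sqrt 2) : ℝ) = 1 + 2 * (1 + Real.sqrt 2) := by
    nlinarith
  rw [he]
  push_cast
  ring

lemma not_root_μwit : ¬ IsRootOfUnity μwit := by
  rintro ⟨n, hn, h⟩
  have h2 : (0:ℝ) < Real.sqrt 2 := Real.sqrt_pos.mpr (by norm_num)
  have h1 : (1:ℝ) < 1 + Real.sqrt 2 := by linarith
  have hh : ((1 + Real.sqrt 2 : ℝ) : ℂ) ^ n = 1 := h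
  rw [← Complex.ofReal_pow, show (1:ℂ) = ((1:ℝ):ℂ) by norm_num, Complex.ofReal_inj] at hh
  have := one_lt_pow₀ h1 hn.ne'
  linarith

/-- The class of the first generator in `ℂ ⊗ FF^ab`. -/
noncomputable abbrev aab : Additive (Abelianization FF) :=
  Additive.ofMul (Abelianization.of (FreeGroup.of 0))

/-- The class of the second generator in `ℂ ⊗ FF^ab`. -/
noncomputable abbrev bab : Additive (Abelianization FF) :=
  Additive.ofMul (Abelianization.of (FreeGroup.of 1))

lemma φwit_of0 : φwit.toMonoidHom (FreeGroup.of 0) = FreeGroup.of 1 := by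
  simp [φwit, fφ]

lemma φwit_of1 : φwit.toMonoidHom (FreeGroup.of 1) = FreeGroup.of 0 * FreeGroup.of 1 ^ 2 := by
  simp [φwit, fφ]

lemma eigvec_eq :
    inducedEnd φwit.toMonoidHom ((1:ℂ) ⊗ₜ aab + μwit ⊗ₜ bab)
      = μwit • ((1:ℂ) ⊗ₜ aab + μwit ⊗ₜ bab) := by
  have ha : (MonoidHom.toAdditive (Abelianization.map φwit.toMonoidHom)).toIntLinearMap aab
      = bab := by
    show Additive.ofMul
      (Abelianization.map φwit.toMonoidHom (Abelianization.of (FreeGroup.of 0))) = bab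
    rw [Abelianization.map_of, φwit_of0]
  have hb : (MonoidHom.toAdditive (Abelianization.map φwit.toMonoidHom)).toIntLinearMap bab
      = aab + (bab + bab) := by
    show Additive.ofMul
      (Abelianization.map φwit.toMonoidHom (Abelianization.of (FreeGroup.of 1)))
      = aab + (bab + bab)
    rw [Abelianization.map_of, φwit_of1, map_mul, map_pow, ofMul_mul, ofMul_pow, two_nsmul]
  show (inducedEnd φwit.toMonoidHom) _ = _
  rw [inducedEnd, map_add, LinearMap.baseChange_tmul, LinearMap.baseChange_tmul, ha, hb,
    TensorProduct.tmul_add, TensorProduct.tmul_add, smul_add,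
    TensorProduct.smul_tmul', TensorProduct.smul_tmul', smul_eq_mul, smul_eq_mul, mul_one,
    μwit_sq, show ((1:ℂ) + 2 * μwit) = 1 + (μwit + μwit) by ring,
    TensorProduct.add_tmul, TensorProduct.add_tmul]
  abel

lemma eigvec_ne : ((1:ℂ) ⊗ₜ aab + μwit ⊗ₜ bab : ℂ ⊗[ℤ] Additive (Abelianization FF)) ≠ 0 := by
  intro h0
  set l0 : FF →* Multiplicative ℤ :=
    FreeGroup.lift ![Multiplicative.ofAdd (1:ℤ), 1] with hl0
  set lA : Abelianization FF →* Multiplicative ℤ := Abelianization.lift l0 with hlA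
  set f : Additive (Abelianization FF) →+ ℤ := MonoidHom.toAdditiveLeft lA with hf
  have hfa : f aab = 1 := by
    simp [hf, hlA, hl0, Abelianization.lift_apply_of]
  have hfb : f bab = 0 := by
    simp [hf, hlA, hl0, Abelianization.lift_apply_of]
  have := congrArg (fun x => TensorProduct.rid ℤ ℂ ((f.toIntLinearMap.baseChange ℂ) x)) h0
  simp only [map_zero] at this
  rw [map_add, LinearMap.baseChange_tmul, LinearMap.baseChange_tmul] at this
  rw [show f.toIntLinearMap aab = ((f aab : ℤ)) from rfl,
    show f.toIntLinearMap bab = ((f bab : ℤ)) from rfl, hfa, hfb] at this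
  simp only [TensorProduct.tmul_zero, map_zero, LinearEquiv.coe_coe, TensorProduct.rid_tmul,
    one_smul, add_zero] at this
  exact one_ne_zero this

lemma intertwine (H : Subgroup FF) (hinv : ∀ x ∈ H, φwit x ∈ H) :
    ∀ v, ((MonoidHom.toAdditive (Abelianization.map H.subtype)).toIntLinearMap.baseChange ℂ)
        (inducedEnd (restrictHom φwit.toMonoidHom H hinv) v)
      = inducedEnd φwit.toMonoidHom
        (((MonoidHom.toAdditive (Abelianization.map H.subtype)).toIntLinearMap.baseChange ℂ) v) := by
  have hcomp : (Abelianization.map H.subtype).comp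
        (Abelianization.map (restrictHom φwit.toMonoidHom H hinv))
      = (Abelianization.map φwit.toMonoidHom).comp (Abelianization.map H.subtype) := by
    apply Abelianization.hom_ext
    ext x
    simp only [MonoidHom.comp_apply, Abelianization.map_of]
    rfl
  intro v
  induction v using TensorProduct.induction_on with
  | zero => simp
  | tmul z m =>
    rw [inducedEnd, inducedEnd, LinearMap.baseChange_tmul, LinearMap.baseChange_tmul,
      LinearMap.baseChange_tmul, LinearMap.baseChange_tmul]
    congr 1
    exact congrArg Additive.ofMul (DFunLike.congr_fun hcomp (Additive.toMul m))
  | add x y hx hy =>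
    rw [map_add, map_add, map_add, map_add, hx, hy]

theorem exists_automorphism_no_invariant_subgroup_all_roots_of_unity :
    ∃ φ : FreeGroup (Fin 2) ≃* FreeGroup (Fin 2),
      ∀ H : Subgroup (FreeGroup (Fin 2)), H.FiniteIndex →
        ∀ hinv : ∀ x ∈ H, φ x ∈ H,
          ∃ μ : ℂ,
            Module.End.HasEigenvalue (inducedEnd (restrictHom φ.toMonoidHom H hinv)) μ ∧
            ¬ IsRootOfUnity μ := by
  refine ⟨φwit, fun H hFI hinv => ⟨μwit, ?_, not_root_μwit⟩⟩
  haveI := hFI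
  haveI : Group.FG FF :=
    Group.fg_iff.mpr ⟨Set.range FreeGroup.of, FreeGroup.closure_range_of _, Set.finite_range _⟩
  haveI : Group.FG (Abelianization H) :=
    Group.fg_of_surjective (f := Abelianization.of)
      (fun y => Quotient.inductionOn y fun g => ⟨g, rfl⟩)
  haveI : Module.Finite ℤ (Additive (Abelianization H)) :=
    Module.Finite.iff_addGroup_fg.mpr inferInstance
  refine eig_of_surj _ (inducedEnd φwit.toMonoidHom) _ (surj_baseChange H)
    (intertwine H hinv) ?_
  exact Module.End.hasEigenvalue_of_hasEigenvector
    ⟨Module.End.mem_eigenspace_iff.mpr eigvec_eq, eigvec_ne⟩
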